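/- Let λ₁ = λ₂ > λ₃ > 0, set μᵢ = (λ₁+λ₂+λ₃)/2 − λᵢ, a = μ₂²+μ₃², b = μ₁²+μ₃², c = μ₁²+μ₂², and A = a x² + b y² + c z². Then for (x, y, z) ∈ ℝ³ with x² + y² + z² = 1, the following are equivalent: (i) there exists λ' ∈ ℝ with x·(a² − 2aA − λ') = 0, y·(b² − 2bA − λ') = 0, z·(c² − 2cA − λ') = 0, and there is NO ν ∈ ℝ with a x = ν x, b y = ν y, c z = ν z; (ii) z² = 1/2 and x² + y² = 1/2. (Paper's Theorem 3.1, case λ₁ = λ₂ > λ₃: the non-harmonic biharmonic unit sections among left-invariant unit vector fields on SU(2) are exactly the two circles z = ±1/√2, x² + y² = 1/2.) -/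
import Mathlib


/-- Theorem 3.1, case λ₁ = λ₂ > λ₃ > 0: the non-harmonic biharmonic unit sections
among left-invariant unit vector fields on SU(2) are exactly the two circles
z = ±1/√2, x² + y² = 1/2 (algebraic form). -/
theorem su2_case12_nonharmonic_biharmonic_sections
    (l₁ l₂ l₃ : ℝ) (h12 : l₁ = l₂) (h23 : l₂ > l₃) (h3 : 0 < l₃)
    (μ₁ μ₂ μ₃ : ℝ)
    (hμ₁ : μ₁ = (l₁ + l₂ + l₃) / 2 - l₁)
    (hμ₂ : μ₂ = (l₁ + l₂ + l₃) / 2 - l₂)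
    (hμ₃ : μ₃ = (l₁ + l₂ + l₃) / 2 - l₃)
    (a b c : ℝ)
    (ha : a = μ₂ ^ 2 + μ₃ ^ 2) (hb : b = μ₁ ^ 2 + μ₃ ^ 2) (hc : c = μ₁ ^ 2 + μ₂ ^ 2)
    (x y z : ℝ) (hxyz : x ^ 2 + y ^ 2 + z ^ 2 = 1)
    (A : ℝ) (hA : A = a * x ^ 2 + b * y ^ 2 + c * z ^ 2) :
    ((∃ l' : ℝ,
        x * (a ^ 2 - 2 * a * A - l') = 0 ∧
        y * (b ^ 2 - 2 * b * A - l') = 0 ∧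
        z * (c ^ 2 - 2 * c * A - l') = 0) ∧
      ¬ ∃ ν : ℝ, a * x = ν * x ∧ b * y = ν * y ∧ c * z = ν * z)
    ↔ (z ^ 2 = 1 / 2 ∧ x ^ 2 + y ^ 2 = 1 / 2) := by

  have hμ12 : μ₁ = μ₂ := by rw [hμ₁, hμ₂, h12]
  have hab : a = b := by rw [ha, hb, hμ12]
  have hac : c < a := by
    have h1 : μ₂ < μ₃ := by rw [hμ₂, hμ₃]; linarith
    have h2 : (0:ℝ) < μ₂ := by rw [hμ₂]; linarith
    rw [ha, hc, hμ12]; nlinarith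
  have hA' : A = a * (x ^ 2 + y ^ 2) + c * z ^ 2 := by rw [hA, hab]; ring
  constructor
  · rintro ⟨⟨l', h1, h2, h3⟩, hnh⟩
    have hz : z ≠ 0 := by
      intro hz0
      exact hnh ⟨a, rfl, by rw [hab], by rw [hz0]; ring⟩
    have hxy : x ≠ 0 ∨ y ≠ 0 := by
      by_contra h
      push_neg at h
      exact hnh ⟨c, by rw [h.1]; ring, by rw [h.2]; ring, rfl⟩
    have hl' : l' = c ^ 2 - 2 * c * A := by
      have := mul_eq_zero.mp h3
      rcases this with h | h
      · exact absurd h hz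
      · linarith
    have key : a ^ 2 - 2 * a * A - l' = 0 := by
      rcases hxy with hx | hy
      · rcases mul_eq_zero.mp h1 with h | h
        · exact absurd h hx
        · exact h
      · rcases mul_eq_zero.mp h2 with h | h
        · exact absurd h hy
        · rw [hab]; linarith
    have hfac : (a - c) * (a + c - 2 * A) = 0 := by rw [hl'] at key; linear_combination key
    have hAval : A = (a + c) / 2 := by
      rcases mul_eq_zero.mp hfac with h | h
      · linarith
      · linarith
    have hz2 : z ^ 2 = 1 / 2 := by
      have hxy1 : x ^ 2 + y ^ 2 = 1 - z ^ 2 := by linarith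
      rw [hxy1] at hA'
      have hne : a - c ≠ 0 := by linarith
      have : (a - c) * (z ^ 2 - 1 / 2) = 0 := by linear_combination hA' - hAval
      rcases mul_eq_zero.mp this with h | h
      · exact absurd h hne
      · linarith
    exact ⟨hz2, by linarith⟩
  · rintro ⟨hz2, hxy2⟩
    have hAval : A = (a + c) / 2 := by rw [hA', hxy2, hz2]; ring
    constructor
    · refine ⟨c ^ 2 - 2 * c * A, ?_, ?_, ?_⟩
      · have : a ^ 2 - 2 * a * A - (c ^ 2 - 2 * c * A) = 0 := by rw [hAval]; ring
        rw [this]; ring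
      · have : b ^ 2 - 2 * b * A - (c ^ 2 - 2 * c * A) = 0 := by rw [← hab, hAval]; ring
        rw [this]; ring
      · ring_nf
    · rintro ⟨ν, e1, e2, e3⟩
      have hz : z ≠ 0 := by intro h; rw [h] at hz2; norm_num at hz2
      have hνc : ν = c := by
        have := mul_right_cancel₀ hz e3.symm
        linarith
      have hxy : x ≠ 0 ∨ y ≠ 0 := by
        by_contra h
        push_neg at h
        rw [h.1, h.2] at hxy2; norm_num at hxy2
      rcases hxy with hx | hy
      · have : a = ν := mul_right_cancel₀ hx e1
        rw [hνc] at this; linarith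
      · have : b = ν := mul_right_cancel₀ hy e2
        rw [hνc] at this; rw [hab] at hac; linarith
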